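/- Let Y < Z in the type B_n Tamari lattice, and consider maximal chains Y = T_0 ⋖ T_1 ⋖ ... ⋖ T_r = Z. Label each covering edge by the pair (k, value) where k is the unique coordinate in which the bracket vectors differ. Then there is at most one maximal chain from Y to Z in which the coordinate labels k_0, k_1, ..., k_{r-1} are strictly decreasing. -/

import Mathlib

/-- Condition (i) for type `B_n` bracket vectors: for `i < j` (0-based),
if `r_j - (j-i)` is a nonnegative integer then `r_i ≤ r_j - (j-i)`
(equivalently `r_i + (j-i) ≤ r_j`; when `r_j = ∞` this holds trivially,
matching the convention that `∞` minus an integer is `∞`). -/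
def condIB (n : ℕ) (r : Fin n → ℕ∞) : Prop :=
  ∀ i j : Fin n, i < j → (((j : ℕ) - (i : ℕ) : ℕ) : ℕ∞) ≤ r j →
    r i + (((j : ℕ) - (i : ℕ) : ℕ) : ℕ∞) ≤ r j

/-- Condition (ii) for type `B_n` bracket vectors: if `∞ > r_i ≥ i`
(1-based; here `i = k+1` for the 0-based index `k`) then `r_{n+i-r_i} = ∞`. -/
def condIIB (n : ℕ) (r : Fin n → ℕ∞) : Prop :=
  ∀ (k : Fin n) (t : ℕ), r k = (t : ℕ∞) → ∀ _ht : (k : ℕ) + 1 ≤ t,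
    r ⟨n + (k : ℕ) - t, by have := k.isLt; omega⟩ = ⊤

/-- Entries lie in `{0, …, n-1} ∪ {∞}`. -/
def entriesB (n : ℕ) (r : Fin n → ℕ∞) : Prop :=
  ∀ k, r k = ⊤ ∨ r k ≤ ((n - 1 : ℕ) : ℕ∞)

/-- A type `B_n` bracket vector. -/
def isBVec (n : ℕ) (r : Fin n → ℕ∞) : Prop :=
  entriesB n r ∧ condIB n r ∧ condIIB n r

/-- `a ⋖ b` within the type `B_n` Tamari lattice of bracket vectors. -/
def covB (n : ℕ) (a b : Fin n → ℕ∞) : Prop :=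
  a < b ∧ ∀ c : Fin n → ℕ∞, isBVec n c → ¬(a < c ∧ c < b)


lemma update_isBVec (n : ℕ) (a b : Fin n → ℕ∞) (ha : isBVec n a) (hb : isBVec n b)
    (hab : ∀ m, a m ≤ b m) (k : Fin n) (hk : a k ≠ b k)
    (hmin : ∀ j : Fin n, a j ≠ b j → k ≤ j) :
    isBVec n (Function.update b k (a k)) := by
  obtain ⟨hae, haI, haII⟩ := ha
  obtain ⟨hbe, hbI, hbII⟩ := hb
  refine ⟨?_, ?_, ?_⟩
  · intro m
    by_cases h : m = k
    · subst h; rw [Function.update_self]; exact hae m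
    · rw [Function.update_of_ne h]; exact hbe m
  · intro i j hij hle
    by_cases hjk : j = k
    · subst hjk
      have hik : i ≠ j := ne_of_lt hij
      have hib : a i = b i := by
        by_contra h
        exact absurd (hmin i h) (not_le.mpr hij)
      rw [Function.update_self] at hle ⊢
      rw [Function.update_of_ne hik, ← hib]
      exact haI i j hij hle
    · by_cases hik : i = k
      · subst hik
        rw [Function.update_of_ne hjk] at hle ⊢
        rw [Function.update_self]
        calc a i + (((j : ℕ) - (i : ℕ) : ℕ) : ℕ∞)
            ≤ b i + (((j : ℕ) - (i : ℕ) : ℕ) : ℕ∞) := add_le_add_left (hab i) _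
          _ ≤ b j := hbI i j hij hle
      · rw [Function.update_of_ne hjk] at hle ⊢
        rw [Function.update_of_ne hik]
        exact hbI i j hij hle
  · intro m t hmt ht
    have hmn : (m : ℕ) < n := m.isLt
    have hkn : (k : ℕ) < n := k.isLt
    by_cases hmk : m = k
    · subst hmk
      rw [Function.update_self] at hmt
      have ht' : t ≤ n - 1 := by
        rcases hae m with h | h
        · rw [hmt] at h
          exact absurd h (by exact_mod_cast WithTop.natCast_ne_top t)
        · rw [hmt] at h
          exact_mod_cast h
      have htop : a ⟨n + (m : ℕ) - t, by omega⟩ = ⊤ := haII m t hmt ht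
      have hpk : (⟨n + (m : ℕ) - t, by omega⟩ : Fin n) ≠ m :=
        Fin.ne_of_val_ne (by simp; omega)
      rw [Function.update_of_ne hpk]
      have h2 := hab ⟨n + (m : ℕ) - t, by omega⟩
      rw [htop] at h2
      exact top_le_iff.mp h2
    · rw [Function.update_of_ne hmk] at hmt
      have ht' : t ≤ n - 1 := by
        rcases hbe m with h | h
        · rw [hmt] at h
          exact absurd h (by exact_mod_cast WithTop.natCast_ne_top t)
        · rw [hmt] at h
          exact_mod_cast h
      have htop : b ⟨n + (m : ℕ) - t, by omega⟩ = ⊤ := hbII m t hmt ht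
      by_cases hpk : (⟨n + (m : ℕ) - t, by omega⟩ : Fin n) = k
      · exfalso
        have hmk2 : (m : ℕ) < (k : ℕ) := by
          have h := congrArg Fin.val hpk
          simp at h
          omega
        have hamb : a m = b m := by
          by_contra h
          have := hmin m h
          rw [Fin.le_def] at this
          omega
        have hat : a (⟨n + (m : ℕ) - t, by omega⟩ : Fin n) = ⊤ :=
          haII m t (by rw [hamb]; exact hmt) ht
        rw [hpk] at hat
        have h2 := hab k
        rw [hat] at h2
        exact hk (hat.trans (top_le_iff.mp h2).symm)
      · rw [Function.update_of_ne hpk]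
        exact htop

lemma cov_diff_unique (n : ℕ) (a b : Fin n → ℕ∞) (ha : isBVec n a) (hb : isBVec n b)
    (hcov : covB n a b) : ∀ k1 k2 : Fin n, a k1 ≠ b k1 → a k2 ≠ b k2 → k1 = k2 := by
  intro k1 k2 h1 h2
  by_contra hne
  have hab : ∀ m, a m ≤ b m := fun m => (le_of_lt hcov.1) m
  classical
  set D : Finset (Fin n) := Finset.univ.filter (fun k => a k ≠ b k) with hD
  have hk1D : k1 ∈ D := by simp [hD, h1]
  have hDne : D.Nonempty := ⟨k1, hk1D⟩
  set k := D.min' hDne with hkdef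
  have hkD : k ∈ D := D.min'_mem hDne
  have hkd : a k ≠ b k := by simpa [hD] using hkD
  have hmin : ∀ j : Fin n, a j ≠ b j → k ≤ j := fun j hj => D.min'_le j (by simp [hD, hj])
  obtain ⟨j, hjD, hjk⟩ : ∃ j : Fin n, a j ≠ b j ∧ j ≠ k := by
    by_cases h : k1 = k
    · exact ⟨k2, h2, fun hh => hne (h.trans hh.symm)⟩
    · exact ⟨k1, h1, h⟩
  have hc : isBVec n (Function.update b k (a k)) :=
    update_isBVec n a b ha hb hab k hkd hmin
  apply hcov.2 _ hc
  constructor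
  · rw [lt_iff_le_and_ne]
    constructor
    · intro m
      by_cases hm : m = k
      · subst hm; rw [Function.update_self]
      · rw [Function.update_of_ne hm]; exact hab m
    · intro h
      apply hjD
      have := congrFun h j
      rw [Function.update_of_ne hjk] at this
      exact this
  · rw [lt_iff_le_and_ne]
    constructor
    · intro m
      by_cases hm : m = k
      · subst hm; rw [Function.update_self]; exact hab k
      · rw [Function.update_of_ne hm]
    · intro h
      apply hkd
      have := congrFun h k
      rw [Function.update_self] at this
      exact this

lemma chain_const {α : Sort*} (f : ℕ → α) : ∀ r : ℕ, (∀ i < r, f i = f (i+1)) → f 0 = f r := by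
  intro r
  induction r with
  | zero => intro _; rfl
  | succ m ih =>
    intro h
    exact (ih (fun i hi => h i (by omega))).trans (h m (by omega))

lemma chain_le (n : ℕ) (T : ℕ → Fin n → ℕ∞) (r : ℕ)
    (h : ∀ i < r, T i < T (i+1)) : ∀ j ≤ r, ∀ i ≤ j, T i ≤ T j := by
  intro j
  induction j with
  | zero =>
    intro _ i hi
    have : i = 0 := by omega
    subst this; exact le_rfl
  | succ j ih =>
    intro hj i hi
    rcases Nat.lt_or_ge i (j+1) with h' | h'
    · exact le_trans (ih (by omega) i (by omega)) (le_of_lt (h j (by omega)))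
    · have : i = j + 1 := by omega
      subst this; exact le_rfl

lemma chain_first_step (n : ℕ) (Y Z : Fin n → ℕ∞) (r : ℕ) (T : ℕ → Fin n → ℕ∞)
    (hr : 0 < r)
    (hT0 : T 0 = Y) (hTr : T r = Z) (hTbv : ∀ i ≤ r, isBVec n (T i))
    (hTcov : ∀ i < r, covB n (T i) (T (i + 1)))
    (hTdec : ∀ i, i + 1 < r → ∀ k k' : Fin n,
      T i k ≠ T (i + 1) k → T (i + 1) k' ≠ T (i + 2) k' → k' < k) :
    ∃ k₀ : Fin n, Y k₀ ≠ Z k₀ ∧ (∀ k, Y k ≠ Z k → k ≤ k₀) ∧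
      T 1 = Function.update Y k₀ (Z k₀) := by
  have huniq : ∀ i < r, ∀ k1 k2 : Fin n, T i k1 ≠ T (i+1) k1 → T i k2 ≠ T (i+1) k2 → k1 = k2 :=
    fun i hi => cov_diff_unique n _ _ (hTbv i (by omega)) (hTbv (i+1) (by omega)) (hTcov i hi)
  obtain ⟨k₀, hk₀⟩ : ∃ k, T 0 k ≠ T 1 k := Function.ne_iff.mp (hTcov 0 hr).1.ne
  have huniq0 : ∀ k, T 0 k ≠ T 1 k → k = k₀ := fun k hk => huniq 0 hr k k₀ hk hk₀
  have hlt : ∀ i, 1 ≤ i → i < r → ∀ k, T i k ≠ T (i+1) k → k < k₀ := by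
    intro i
    induction i with
    | zero => omega
    | succ i ih =>
      intro _ hir k hk
      rcases Nat.eq_zero_or_pos i with h0 | hpos
      · subst h0
        exact hTdec 0 hir k₀ k hk₀ hk
      · obtain ⟨k', hk'⟩ := Function.ne_iff.mp (hTcov i (by omega)).1.ne
        exact lt_trans (hTdec i hir k' k hk' hk) (ih hpos (by omega) k' hk')
  have hzk : T 1 k₀ = Z k₀ := by
    have key : ∀ j, 1 ≤ j → j ≤ r → T j k₀ = T 1 k₀ := by
      intro j
      induction j with
      | zero => omega
      | succ j ih =>
        intro _ hjr
        rcases Nat.eq_zero_or_pos j with h0 | hpos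
        · subst h0; rfl
        · have hstep : T j k₀ = T (j+1) k₀ := by
            by_contra h
            exact absurd (hlt j hpos (by omega) k₀ h) (lt_irrefl _)
          rw [← hstep]; exact ih hpos (by omega)
    rw [← hTr]
    exact (key r hr le_rfl).symm
  have hYZk : Y k₀ ≠ Z k₀ := by
    rw [← hT0, ← hzk]
    exact hk₀
  refine ⟨k₀, hYZk, ?_, ?_⟩
  · intro k hk
    have hne0r : T 0 k ≠ T r k := by rw [hT0, hTr]; exact hk
    obtain ⟨i, hi, hne⟩ : ∃ i < r, T i k ≠ T (i+1) k := by
      by_contra h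
      push_neg at h
      exact hne0r (chain_const (fun i => T i k) r h)
    rcases Nat.eq_zero_or_pos i with h0 | hpos
    · subst h0; exact le_of_eq (huniq0 k hne)
    · exact le_of_lt (hlt i hpos hi k hne)
  · funext k
    by_cases hk : k = k₀
    · subst hk; rw [Function.update_self]; exact hzk
    · rw [Function.update_of_ne hk, ← hT0]
      by_contra h
      exact hk (huniq0 k (fun e => h e.symm))

lemma tamari_aux (n : ℕ) : ∀ (r : ℕ) (Y Z : Fin n → ℕ∞), Y < Z →
    ∀ (r' : ℕ) (T T' : ℕ → Fin n → ℕ∞),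
    T 0 = Y → T r = Z → (∀ i ≤ r, isBVec n (T i)) →
    (∀ i < r, covB n (T i) (T (i + 1))) →
    (∀ i, i + 1 < r → ∀ k k' : Fin n,
      T i k ≠ T (i + 1) k → T (i + 1) k' ≠ T (i + 2) k' → k' < k) →
    T' 0 = Y → T' r' = Z → (∀ i ≤ r', isBVec n (T' i)) →
    (∀ i < r', covB n (T' i) (T' (i + 1))) →
    (∀ i, i + 1 < r' → ∀ k k' : Fin n,
      T' i k ≠ T' (i + 1) k → T' (i + 1) k' ≠ T' (i + 2) k' → k' < k) →
    r = r' ∧ ∀ i ≤ r, T i = T' i := by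
  intro r
  induction r with
  | zero =>
    intro Y Z hYZ r' T T' hT0 hTr _ _ _ _ _ _ _ _
    exfalso
    rw [hT0] at hTr
    exact hYZ.ne hTr
  | succ m ih =>
    intro Y Z hYZ r' T T' hT0 hTr hTbv hTcov hTdec hT0' hTr' hTbv' hTcov' hTdec'
    rcases r' with _ | m'
    · exfalso
      rw [hT0'] at hTr'
      exact hYZ.ne hTr'
    obtain ⟨k₀, hk₀ne, hk₀max, hT1⟩ :=
      chain_first_step n Y Z (m+1) T (by omega) hT0 hTr hTbv hTcov hTdec
    obtain ⟨k₁, hk₁ne, hk₁max, hT1'⟩ :=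
      chain_first_step n Y Z (m'+1) T' (by omega) hT0' hTr' hTbv' hTcov' hTdec'
    have hkk : k₀ = k₁ := le_antisymm (hk₁max _ hk₀ne) (hk₀max _ hk₁ne)
    have hT11 : T 1 = T' 1 := by rw [hT1, hT1', hkk]
    have hleZ : ∀ i ≤ m + 1, T i ≤ Z := by
      intro i hi
      have := chain_le n T (m+1) (fun i hi => (hTcov i hi).1) (m+1) le_rfl i hi
      rwa [hTr] at this
    have hleZ' : ∀ i ≤ m' + 1, T' i ≤ Z := by
      intro i hi
      have := chain_le n T' (m'+1) (fun i hi => (hTcov' i hi).1) (m'+1) le_rfl i hi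
      rwa [hTr'] at this
    rcases Nat.eq_zero_or_pos m with hm | hm
    · subst hm
      have hT1Z : T 1 = Z := hTr
      have hm' : m' = 0 := by
        by_contra h
        have h2 : T' 1 < T' 2 := (hTcov' 1 (by omega)).1
        have h3 : T' 2 ≤ Z := hleZ' 2 (by omega)
        rw [← hT11, hT1Z] at h2
        exact absurd (lt_of_lt_of_le h2 h3) (lt_irrefl _)
      subst hm'
      refine ⟨rfl, ?_⟩
      intro i hi
      interval_cases i
      · rw [hT0, hT0']
      · rw [hTr, hTr']
    · have hm' : 0 < m' := by
        by_contra h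
        have h0 : m' = 0 := by omega
        subst h0
        have hZ1 : T 1 = Z := by rw [hT11]; exact hTr'
        have h2 : T 1 < T 2 := (hTcov 1 (by omega)).1
        have h3 : T 2 ≤ Z := hleZ 2 (by omega)
        rw [hZ1] at h2
        exact absurd (lt_of_lt_of_le h2 h3) (lt_irrefl _)
      have hY1Z : T 1 < Z := by
        have h2 : T 1 < T 2 := (hTcov 1 (by omega)).1
        exact lt_of_lt_of_le h2 (hleZ 2 (by omega))
      obtain ⟨hmm', hstep⟩ := ih (T 1) Z hY1Z m' (fun i => T (i+1)) (fun i => T' (i+1))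
        rfl hTr (fun i hi => hTbv (i+1) (by omega)) (fun i hi => hTcov (i+1) (by omega))
        (fun i hi => hTdec (i+1) (by omega))
        hT11.symm hTr' (fun i hi => hTbv' (i+1) (by omega)) (fun i hi => hTcov' (i+1) (by omega))
        (fun i hi => hTdec' (i+1) (by omega))
      refine ⟨by omega, ?_⟩
      intro i hi
      rcases i with _ | j
      · rw [hT0, hT0']
      · exact hstep j (by omega)

/-- For `Y < Z` in the type `B_n` Tamari lattice there is at most one maximal
chain `Y = T_0 ⋖ T_1 ⋖ ⋯ ⋖ T_r = Z` in which the coordinates where successive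
bracket vectors differ are strictly decreasing. -/
theorem tamariB_unique_decreasing_chain (n : ℕ) (Y Z : Fin n → ℕ∞)
    (hY : isBVec n Y) (hZ : isBVec n Z) (hYZ : Y < Z)
    (r r' : ℕ) (T T' : ℕ → Fin n → ℕ∞)
    (hT0 : T 0 = Y) (hTr : T r = Z) (hTbv : ∀ i ≤ r, isBVec n (T i))
    (hTcov : ∀ i < r, covB n (T i) (T (i + 1)))
    (hTdec : ∀ i, i + 1 < r → ∀ k k' : Fin n,
      T i k ≠ T (i + 1) k → T (i + 1) k' ≠ T (i + 2) k' → k' < k)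
    (hT0' : T' 0 = Y) (hTr' : T' r' = Z) (hTbv' : ∀ i ≤ r', isBVec n (T' i))
    (hTcov' : ∀ i < r', covB n (T' i) (T' (i + 1)))
    (hTdec' : ∀ i, i + 1 < r' → ∀ k k' : Fin n,
      T' i k ≠ T' (i + 1) k → T' (i + 1) k' ≠ T' (i + 2) k' → k' < k) :
    r = r' ∧ ∀ i ≤ r, T i = T' i := by
  exact tamari_aux n r Y Z hYZ r' T T' hT0 hTr hTbv hTcov hTdec hT0' hTr' hTbv' hTcov' hTdec'
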